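/- Let d ≥ 1, k > 1 with k real, and let f : ℝ^d → ℝ be a polynomial function of total degree at most 4. Then for every θ ∈ ℝ^d, every w ∈ ℝ^d, and every c > 0, ( −f(θ + k c w) + k³ f(θ + c w) − k³ f(θ − c w) + f(θ − k c w) ) / ( 2 k (k² − 1) c ) = ∇f(θ) · w. -/

import Mathlib

open Polynomial in
private lemma differentiable_mveval {d : ℕ} (p : MvPolynomial (Fin d) ℝ) :
    Differentiable ℝ (fun x : Fin d → ℝ => MvPolynomial.eval x p) := by
  induction p using MvPolynomial.induction_on with
  | C a => simpa using differentiable_const a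
  | add p q hp hq => simpa [MvPolynomial.eval_add] using hp.fun_add hq
  | mul_X p i hp =>
      simpa [MvPolynomial.eval_mul] using hp.fun_mul (differentiable_apply i)

/-- The four-point gradient estimator
`G = (−f(θ+kcw) + k³ f(θ+cw) − k³ f(θ−cw) + f(θ−kcw)) / (2k(k²−1)c)`
is exact for the directional derivative `∇f(θ)·w` on polynomial functions of
total degree at most 4. -/
theorem stmt_3 (d : ℕ) (hd : 1 ≤ d) (k : ℝ) (hk : 1 < k)
    (f : (Fin d → ℝ) → ℝ) (p : MvPolynomial (Fin d) ℝ)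
    (hdeg : p.totalDegree ≤ 4) (hfp : ∀ x, f x = MvPolynomial.eval x p) :
    ∀ (θ w : Fin d → ℝ) (c : ℝ), 0 < c →
      (-f (θ + (k * c) • w) + k ^ 3 * f (θ + c • w) - k ^ 3 * f (θ - c • w)
        + f (θ - (k * c) • w)) / (2 * k * (k ^ 2 - 1) * c) = fderiv ℝ f θ w := by
  intro θ w c hc
  classical
  -- restrict p to the line t ↦ θ + t • w
  set g : Fin d → Polynomial ℝ :=
    fun i => Polynomial.C (θ i) + Polynomial.C (w i) * Polynomial.X with hg
  set q : Polynomial ℝ := MvPolynomial.aeval g p with hqdef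
  have heval : ∀ t : ℝ, q.eval t = MvPolynomial.eval (θ + t • w) p := by
    intro t
    have := MvPolynomial.comp_aeval_apply (Polynomial.aeval t (R := ℝ))
      (f := g) (p := p)
    simp only [Polynomial.coe_aeval_eq_eval] at this
    have hgi : (fun i => Polynomial.eval t (g i)) = θ + t • w := by
      funext i
      simp only [hg, Polynomial.eval_add, Polynomial.eval_mul, Polynomial.eval_C,
        Polynomial.eval_X, Pi.add_apply, Pi.smul_apply, smul_eq_mul]
      ring
    rw [hqdef, this, hgi]
    rfl
  -- degree bound
  have hq4 : q.natDegree ≤ 4 := by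
    rw [hqdef, MvPolynomial.aeval_def, MvPolynomial.eval₂_eq]
    refine (Polynomial.natDegree_sum_le_of_forall_le _ _ ?_)
    intro m hm
    refine le_trans (Polynomial.natDegree_mul_le) ?_
    have h1 : (algebraMap ℝ (Polynomial ℝ) (MvPolynomial.coeff m p)).natDegree = 0 := by
      simp [Polynomial.natDegree_C]
    rw [h1, zero_add]
    refine le_trans (Polynomial.natDegree_prod_le _ _) ?_
    have h2 : ∀ i : Fin d, (g i ^ m i).natDegree ≤ m i := by
      intro i
      refine le_trans (Polynomial.natDegree_pow_le) ?_
      have : (g i).natDegree ≤ 1 := by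
        refine le_trans (Polynomial.natDegree_add_le _ _) ?_
        simp [Polynomial.natDegree_C]
        exact le_trans (Polynomial.natDegree_mul_le) (by simp)
      calc m i * (g i).natDegree ≤ m i * 1 := Nat.mul_le_mul_left _ this
        _ = m i := mul_one _
    refine le_trans (Finset.sum_le_sum fun i _ => h2 i) ?_
    exact le_trans (MvPolynomial.le_totalDegree hm) hdeg
  -- fderiv f θ w = q.coeff 1
  have hf' : ∀ x, f x = MvPolynomial.eval x p := hfp
  have hdf : Differentiable ℝ f := by
    have := differentiable_mveval p
    convert this using 1
    funext x; exact hf' x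
  have hline : HasDerivAt (fun t : ℝ => θ + t • w) w 0 := by
    simpa using ((hasDerivAt_id (0:ℝ)).smul_const w).const_add θ
  have hF : HasFDerivAt f (fderiv ℝ f θ) (θ + (0:ℝ) • w) := by
    simpa using (hdf θ).hasFDerivAt
  have hcomp : HasDerivAt (fun t : ℝ => f (θ + t • w)) (fderiv ℝ f θ w) 0 :=
    hF.comp_hasDerivAt 0 hline
  have hcomp2 : HasDerivAt (fun t : ℝ => f (θ + t • w)) (q.derivative.eval 0) 0 := by
    have : (fun t : ℝ => f (θ + t • w)) = fun t => q.eval t := by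
      funext t; rw [hf', heval]
    rw [this]
    exact q.hasDerivAt 0
  have hkey : fderiv ℝ f θ w = q.coeff 1 := by
    have := hcomp.unique hcomp2
    rw [this, ← Polynomial.coeff_zero_eq_eval_zero, Polynomial.coeff_derivative]
    simp
  -- now the algebraic identity
  rw [hkey]
  have hev : ∀ t : ℝ, f (θ + t • w) = q.eval t := fun t => by rw [hf', heval]
  have e1 : f (θ + (k * c) • w) = q.eval (k * c) := hev _
  have e2 : f (θ + c • w) = q.eval c := hev _
  have e3 : f (θ - c • w) = q.eval (-c) := by
    have : θ - c • w = θ + (-c) • w := by module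
    rw [this]; exact hev _
  have e4 : f (θ - (k * c) • w) = q.eval (-(k * c)) := by
    have : θ - (k * c) • w = θ + (-(k * c)) • w := by module
    rw [this]; exact hev _
  rw [e1, e2, e3, e4]
  have hq5 : ∀ t : ℝ, q.eval t = ∑ i ∈ Finset.range 5, q.coeff i * t ^ i := by
    intro t
    exact Polynomial.eval_eq_sum_range' (lt_of_le_of_lt hq4 (by norm_num)) t
  rw [hq5, hq5, hq5, hq5]
  simp only [Finset.sum_range_succ, Finset.sum_range_zero]
  have hk0 : k ≠ 0 := by positivity
  have hc0 : c ≠ 0 := ne_of_gt hc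
  have hk1 : k ^ 2 - 1 ≠ 0 := by nlinarith
  field_simp
  ring
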